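/- Let α ≥ 1, β > 1 and r > 1. There is a constant C(α,β,r) = (ln 2 + 2β^k ln(2α))/ln 2 with k the least integer such that 2^{k−2} ≥ r, such that for any standardized random variable X whose moments grow α-regularly and with speed β, one has N(rt) ≤ C(α,β,r)·N(t) for all t ≥ 2, where N(t) = −ln P(|X| > t). -/

import Mathlib

open MeasureTheory

/-- `‖X‖_p = (E|X|^p)^{1/p}`. -/
noncomputable def mnorm {Ω : Type*} [MeasurableSpace Ω] (μ : Measure Ω) (X : Ω → ℝ)
    (p : ℝ) : ℝ :=
  (∫ ω, |X ω| ^ p ∂μ) ^ (1 / p)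

set_option linter.unusedSectionVars false
set_option linter.unusedVariables false
set_option maxHeartbeats 1000000

section lemmas

variable {Ω : Type*} [MeasurableSpace Ω] (μ : Measure Ω) [IsProbabilityMeasure μ] (X : Ω → ℝ)

lemma integral_abs_rpow_nonneg (p : ℝ) : 0 ≤ ∫ ω, |X ω| ^ p ∂μ :=
  integral_nonneg fun ω => Real.rpow_nonneg (abs_nonneg _) _

lemma mnorm_nonneg (p : ℝ) : 0 ≤ mnorm μ X p :=
  Real.rpow_nonneg (integral_abs_rpow_nonneg μ X p) _

lemma mnorm_rpow {p : ℝ} (hp : p ≠ 0) : mnorm μ X p ^ p = ∫ ω, |X ω| ^ p ∂μ := by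
  rw [mnorm, ← Real.rpow_mul (integral_abs_rpow_nonneg μ X p), one_div,
    inv_mul_cancel₀ hp, Real.rpow_one]

lemma mnorm_eq_toReal {p : ℝ} (hp : 0 < p) (h : MemLp X (ENNReal.ofReal p) μ) :
    mnorm μ X p = (eLpNorm X (ENNReal.ofReal p) μ).toReal := by
  rw [MemLp.eLpNorm_eq_integral_rpow_norm (by simp [ENNReal.ofReal_eq_zero, not_le, hp])
      ENNReal.ofReal_ne_top h,
    ENNReal.toReal_ofReal (Real.rpow_nonneg
      (integral_nonneg fun ω => Real.rpow_nonneg (norm_nonneg _) _) _)]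
  simp [mnorm, ENNReal.toReal_ofReal hp.le, Real.norm_eq_abs, one_div]

lemma mnorm_mono {s p : ℝ} (hs : 0 < s) (hsp : s ≤ p)
    (hps : MemLp X (ENNReal.ofReal p) μ) : mnorm μ X s ≤ mnorm μ X p := by
  have hp : 0 < p := hs.trans_le hsp
  have hss : MemLp X (ENNReal.ofReal s) μ :=
    hps.mono_exponent (ENNReal.ofReal_le_ofReal hsp)
  rw [mnorm_eq_toReal μ X hs hss, mnorm_eq_toReal μ X hp hps]
  exact ENNReal.toReal_mono hps.eLpNorm_ne_top
    (eLpNorm_le_eLpNorm_of_exponent_le (ENNReal.ofReal_le_ofReal hsp) hps.aestronglyMeasurable)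

lemma abs_rpow_two (x : ℝ) : |x| ^ (2:ℝ) = x ^ 2 := by
  rw [show (2:ℝ) = ((2:ℕ) : ℝ) by norm_num, Real.rpow_natCast, sq_abs]

lemma mnorm_two (hvar : ∫ ω, (X ω) ^ 2 ∂μ = 1) : mnorm μ X 2 = 1 := by
  have : ∫ ω, |X ω| ^ (2:ℝ) ∂μ = 1 := by
    rw [← hvar]; exact integral_congr_ae (ae_of_all _ fun ω => abs_rpow_two _)
  rw [mnorm, this, Real.one_rpow]

lemma markov {p c : ℝ} (hp : 0 < p) (hc : 0 < c)
    (h : MemLp X (ENNReal.ofReal p) μ) :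
    (μ {ω | c < |X ω|}).toReal ≤ (∫ ω, |X ω| ^ p ∂μ) / c ^ p := by
  have hint : Integrable (fun ω => |X ω| ^ p) μ := by
    have := h.integrable_norm_rpow (by simp [ENNReal.ofReal_eq_zero, not_le, hp])
      ENNReal.ofReal_ne_top
    simpa [ENNReal.toReal_ofReal hp.le, Real.norm_eq_abs] using this
  have key := mul_meas_ge_le_integral_of_nonneg
    (ae_of_all μ fun ω => Real.rpow_nonneg (abs_nonneg (X ω)) p) hint (c ^ p)
  have hsub : {ω | c < |X ω|} ⊆ {ω | c ^ p ≤ |X ω| ^ p} := fun ω hω =>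
    Real.rpow_le_rpow hc.le (le_of_lt hω) hp.le
  have hmono : (μ {ω | c < |X ω|}).toReal ≤ (μ {ω | c ^ p ≤ |X ω| ^ p}).toReal :=
    ENNReal.toReal_mono (measure_ne_top μ _) (measure_mono hsub)
  have hcp : 0 < c ^ p := Real.rpow_pos_of_pos hc p
  rw [le_div_iff₀ hcp]
  calc (μ {ω | c < |X ω|}).toReal * c ^ p
      ≤ (μ {ω | c ^ p ≤ |X ω| ^ p}).toReal * c ^ p := by gcongr
    _ = c ^ p * (μ {ω | c ^ p ≤ |X ω| ^ p}).toReal := mul_comm _ _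
    _ ≤ _ := key

lemma paley_zygmund (hXm : Measurable X) {p : ℝ} (hp : 0 < p)
    (h2p : MemLp X (ENNReal.ofReal (2*p)) μ) :
    (1 - (1/2:ℝ)^p)^2 * (∫ ω, |X ω|^p ∂μ)^2 ≤
      (∫ ω, |X ω|^(2*p) ∂μ) *
        (μ {ω | (1/2:ℝ)^p * ∫ ω, |X ω|^p ∂μ < |X ω|^p}).toReal := by
  set f : Ω → ℝ := fun ω => |X ω| ^ p with hf
  set E : ℝ := ∫ ω, f ω ∂μ with hE
  set θ : ℝ := (1/2:ℝ)^p with hθ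
  have hθ0 : 0 ≤ θ := Real.rpow_nonneg (by norm_num) _
  have hθ1 : θ ≤ 1 := Real.rpow_le_one (by norm_num) (by norm_num) hp.le
  have hfnn : ∀ ω, 0 ≤ f ω := fun ω => Real.rpow_nonneg (abs_nonneg _) _
  have hE0 : 0 ≤ E := integral_nonneg hfnn
  have hfm : Measurable f := (Real.continuous_rpow_const hp.le).measurable.comp hXm.abs
  set S : Set Ω := {ω | θ * E < f ω} with hS
  have hSm : MeasurableSet S := measurableSet_lt measurable_const hfm
  have hp2 : (0:ℝ) < 2 * p := by linarith
  have hf2 : MemLp f (ENNReal.ofReal 2) μ := by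
    have := h2p.norm_rpow_div (ENNReal.ofReal p)
    have hdiv : ENNReal.ofReal (2*p) / ENNReal.ofReal p = ENNReal.ofReal 2 := by
      rw [← ENNReal.ofReal_div_of_pos hp]
      congr 1
      field_simp
    rw [hdiv, ENNReal.toReal_ofReal hp.le] at this
    simpa [Real.norm_eq_abs] using this
  have hfint : Integrable f μ := hf2.integrable (by simp [ENNReal.one_le_ofReal])
  have hsplit : E = (∫ ω in S, f ω ∂μ) + ∫ ω in Sᶜ, f ω ∂μ :=
    (integral_add_compl hSm hfint).symm
  have hcompl : ∫ ω in Sᶜ, f ω ∂μ ≤ θ * E := by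
    have h1 : ∫ ω in Sᶜ, f ω ∂μ ≤ ∫ _ω in Sᶜ, θ * E ∂μ := by
      refine setIntegral_mono_on hfint.integrableOn (integrableOn_const ?_) hSm.compl
        (fun ω hω => le_of_not_gt hω)
      exact measure_ne_top μ _
    have h2 : ∫ _ω in Sᶜ, θ * E ∂μ = (μ Sᶜ).toReal * (θ * E) := by
      simp [setIntegral_const, smul_eq_mul, Measure.real]
    have h3 : (μ Sᶜ).toReal ≤ 1 := by
      have := measure_mono (Set.subset_univ Sᶜ) (μ := μ)
      simpa using ENNReal.toReal_mono (by simp) this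
    calc ∫ ω in Sᶜ, f ω ∂μ ≤ (μ Sᶜ).toReal * (θ * E) := h1.trans_eq h2
      _ ≤ 1 * (θ * E) := mul_le_mul_of_nonneg_right h3 (mul_nonneg hθ0 hE0)
      _ = θ * E := one_mul _
  set g : Ω → ℝ := S.indicator (fun _ => (1:ℝ)) with hg
  have hgnn : ∀ ω, 0 ≤ g ω := fun ω => Set.indicator_nonneg (fun _ _ => zero_le_one) ω
  have hg2 : MemLp g (ENNReal.ofReal 2) μ :=
    memLp_indicator_const _ hSm 1 (Or.inr (measure_ne_top μ S))
  have hconj : Real.HolderConjugate 2 2 := Real.HolderConjugate.two_two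
  have hCS := integral_mul_le_Lp_mul_Lq_of_nonneg hconj
    (ae_of_all μ hfnn) (ae_of_all μ hgnn) hf2 hg2
  have hfg : ∀ ω, f ω * g ω = S.indicator f ω := by
    intro ω
    by_cases hω : ω ∈ S <;> simp [hg, Set.indicator_of_mem, Set.indicator_of_notMem, hω]
  have hSpart : ∫ ω in S, f ω ∂μ = ∫ ω, f ω * g ω ∂μ := by
    rw [show (fun ω => f ω * g ω) = S.indicator f from funext hfg, integral_indicator hSm]
  have hfsq : ∫ ω, f ω ^ (2:ℝ) ∂μ = ∫ ω, |X ω| ^ (2*p) ∂μ := by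
    refine integral_congr_ae (ae_of_all _ fun ω => ?_)
    show (fun ω => |X ω| ^ p) ω ^ (2:ℝ) = |X ω| ^ (2*p)
    rw [mul_comm 2 p, Real.rpow_mul (abs_nonneg _)]
  have hgsq : ∫ ω, g ω ^ (2:ℝ) ∂μ = (μ S).toReal := by
    have : ∀ ω, g ω ^ (2:ℝ) = S.indicator (fun _ => (1:ℝ)) ω := by
      intro ω
      by_cases hω : ω ∈ S <;>
        simp [hg, Set.indicator_of_mem, Set.indicator_of_notMem, hω,
          Real.one_rpow, Real.zero_rpow (two_ne_zero)]
    rw [integral_congr_ae (ae_of_all _ this), integral_indicator_const (1:ℝ) hSm]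
    simp [Measure.real]
  rw [hSpart] at hsplit
  rw [hfsq, hgsq] at hCS
  have hmain : (1 - θ) * E ≤
      (∫ ω, |X ω| ^ (2*p) ∂μ) ^ (1/2:ℝ) * (μ S).toReal ^ (1/2:ℝ) := by
    linarith only [hCS, hsplit, hcompl]
  have hI2 : (0:ℝ) ≤ ∫ ω, |X ω| ^ (2*p) ∂μ :=
    integral_nonneg fun ω => Real.rpow_nonneg (abs_nonneg _) _
  have hμS : (0:ℝ) ≤ (μ S).toReal := ENNReal.toReal_nonneg
  have hLnn : 0 ≤ (1 - θ) * E := mul_nonneg (by linarith) hE0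
  have hsq := pow_le_pow_left₀ hLnn hmain 2
  calc (1 - θ)^2 * E^2 = ((1-θ)*E)^2 := by ring
    _ ≤ ((∫ ω, |X ω| ^ (2*p) ∂μ) ^ (1/2:ℝ) * (μ S).toReal ^ (1/2:ℝ))^2 := hsq
    _ = (∫ ω, |X ω| ^ (2*p) ∂μ) * (μ S).toReal := by
        rw [mul_pow, ← Real.rpow_natCast ((∫ ω, |X ω| ^ (2*p) ∂μ) ^ (1/2:ℝ)) 2,
          ← Real.rpow_natCast ((μ S).toReal ^ (1/2:ℝ)) 2,
          ← Real.rpow_mul hI2, ← Real.rpow_mul hμS]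
        norm_num

end lemmas

theorem stmt10_aux {Ω : Type*} [MeasurableSpace Ω] (μ : Measure Ω) [IsProbabilityMeasure μ]
    (X : Ω → ℝ) (α β r : ℝ) (hα : 1 ≤ α) (hβ : 1 < β) (hr : 1 < r)
    (hXm : Measurable X)
    (hvar : ∫ ω, (X ω) ^ 2 ∂μ = 1)
    (hmem : ∀ p : ℝ, 2 ≤ p → MemLp X (ENNReal.ofReal p) μ)
    (hreg : ∀ p q : ℝ, 2 ≤ q → q ≤ p → mnorm μ X p ≤ α * (p / q) * mnorm μ X q)
    (hspeed : ∀ p : ℝ, 2 ≤ p → 2 * mnorm μ X p ≤ mnorm μ X (β * p))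
    (k : ℕ) (hk : IsLeast {m : ℕ | r ≤ 2 ^ ((m : ℝ) - 2)} k)
    (t : ℝ) (ht : 2 ≤ t) :
    (μ {ω | t < |X ω|}).toReal
        ^ ((Real.log 2 + 2 * β ^ k * Real.log (2 * α)) / Real.log 2)
      ≤ (μ {ω | r * t < |X ω|}).toReal := by
  have ht0 : (0:ℝ) < t := by linarith
  have hβ0 : (0:ℝ) < β := by linarith
  have hβ1 : (1:ℝ) ≤ β := hβ.le
  have hn2 : mnorm μ X 2 = 1 := mnorm_two μ X hvar
  have hn_ge_one : ∀ p : ℝ, 2 ≤ p → 1 ≤ mnorm μ X p := fun p hp => by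
    rw [← hn2]; exact mnorm_mono μ X two_pos hp (hmem p hp)
  -- iterate the speed hypothesis
  have hiter : ∀ j : ℕ, ∀ u : ℝ, 2 ≤ u →
      2^j * mnorm μ X u ≤ mnorm μ X (β^j * u) := by
    intro j
    induction j with
    | zero => intro u hu; simp
    | succ j ih =>
      intro u hu
      have hβu : 2 ≤ β * u := hu.trans (le_mul_of_one_le_left (by linarith) hβ1)
      have h2j : (0:ℝ) ≤ 2^j := by positivity
      calc (2:ℝ)^(j+1) * mnorm μ X u = 2^j * (2 * mnorm μ X u) := by ring
        _ ≤ 2^j * mnorm μ X (β*u) := mul_le_mul_of_nonneg_left (hspeed u hu) h2j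
        _ ≤ mnorm μ X (β^j * (β*u)) := ih (β*u) hβu
        _ = mnorm μ X (β^(j+1) * u) := by
            rw [show β^j * (β*u) = β^(j+1)*u by rw [pow_succ]; ring]
  -- k is at least 3
  have hk3 : 3 ≤ k := by
    by_contra h
    push_neg at h
    have hkle : (k:ℝ) - 2 ≤ 0 := by
      have : (k:ℝ) ≤ 2 := by exact_mod_cast Nat.le_of_lt_succ h
      linarith
    have := Real.rpow_le_one_of_one_le_of_nonpos one_le_two hkle
    have := hk.1
    simp only [Set.mem_setOf_eq] at this
    linarith
  -- 2r ≤ 2^(k-1)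
  have hrk : r ≤ (2:ℝ)^(k-2 : ℕ) := by
    have h1 := hk.1
    simp only [Set.mem_setOf_eq] at h1
    rwa [show ((k:ℝ)-2) = ((k-2:ℕ):ℝ) by push_cast [Nat.cast_sub (by omega : 2 ≤ k)]; ring,
      Real.rpow_natCast] at h1
  have hr2 : 2 * r ≤ (2:ℝ)^(k-1 : ℕ) := by
    have : (2:ℝ)^(k-1:ℕ) = 2 * 2^(k-2:ℕ) := by
      rw [show k-1 = (k-2)+1 by omega, pow_succ]; ring
    rw [this]; linarith
  -- the set S and its infimum
  set S : Set ℝ := {p : ℝ | 2 ≤ p ∧ t ≤ mnorm μ X (β*p)} with hSdef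
  have hSne : S.Nonempty := by
    obtain ⟨m, hm⟩ := pow_unbounded_of_one_lt t one_lt_two
    refine ⟨β^m * 2, ?_, ?_⟩
    · exact le_mul_of_one_le_left (by norm_num) (one_le_pow₀ hβ1)
    · have h1 := hiter (m+1) 2 le_rfl
      rw [hn2, mul_one] at h1
      have h2 : β * (β^m * 2) = β^(m+1) * 2 := by rw [pow_succ]; ring
      rw [h2]
      have : (2:ℝ)^m ≤ 2^(m+1) := by
        have : (0:ℝ) < 2^m := by positivity
        calc (2:ℝ)^m = 2^m * 1 := by ring
          _ ≤ 2^m * 2 := by nlinarith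
          _ = 2^(m+1) := by rw [pow_succ]
      linarith
  have hSbdd : BddBelow S := ⟨2, fun x hx => hx.1⟩
  set q : ℝ := sInf S with hq
  have hq2 : 2 ≤ q := le_csInf hSne fun x hx => hx.1
  set A : ℝ := (μ {ω | t < |X ω|}).toReal with hA
  set B : ℝ := (μ {ω | r * t < |X ω|}).toReal with hB
  have hA0 : 0 ≤ A := ENNReal.toReal_nonneg
  set L : ℝ := Real.log (2*α) with hL
  have hlog2 : (0:ℝ) < Real.log 2 := Real.log_pos one_lt_two
  have hL2 : Real.log 2 ≤ L := Real.log_le_log two_pos (by linarith)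
  have hL0 : 0 < L := lt_of_lt_of_le hlog2 hL2
  have hβk1 : (1:ℝ) ≤ β^k := one_le_pow₀ hβ1
  set C : ℝ := (Real.log 2 + 2 * β^k * L) / Real.log 2 with hC
  have hC0 : 0 ≤ C := by
    apply div_nonneg _ hlog2.le
    positivity
  have hClog : C * Real.log 2 = Real.log 2 + 2*β^k*L := by
    rw [hC, div_mul_cancel₀ _ hlog2.ne']
  -- the key estimate, for every ε > 0
  have key : ∀ ε : ℝ, 0 < ε → A ^ C ≤ B * Real.exp (ε * (C * Real.log 2)) := by
    intro ε hε
    obtain ⟨s, hsS, hslt⟩ := exists_lt_of_csInf_lt hSne (lt_add_of_pos_right q hε)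
    have hs2 : 2 ≤ s := hsS.1
    have hsβ : t ≤ mnorm μ X (β*s) := hsS.2
    set p0 : ℝ := max (s - ε) 2 with hp0def
    have hp02 : 2 ≤ p0 := le_max_right _ _
    have hp0pos : 0 < p0 := by linarith
    have hp0ge : s - ε ≤ p0 := le_max_left _ _
    -- upper bound on A
    have hAbound : A ≤ (1/2:ℝ) ^ p0 := by
      have half_rpow : ∀ y : ℝ, (1/2:ℝ)^y = (t/2)^y / t^y := by
        intro y
        rw [← Real.div_rpow (by linarith) (by linarith : (0:ℝ) ≤ t)]
        congr 1
        field_simp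
      rcases le_or_gt (s - ε) 2 with h1 | h1
      · have hp0eq : p0 = 2 := max_eq_right h1
        have hm := markov μ X two_pos ht0 (hmem 2 le_rfl)
        have hint2 : ∫ ω, |X ω| ^ (2:ℝ) ∂μ = 1 := by
          rw [← hvar]; exact integral_congr_ae (ae_of_all _ fun ω => abs_rpow_two _)
        rw [hint2] at hm
        have ht2 : (2:ℝ)^(2:ℝ) ≤ t^(2:ℝ) := Real.rpow_le_rpow (by norm_num) ht (by norm_num)
        have h2pos : (0:ℝ) < (2:ℝ)^(2:ℝ) := Real.rpow_pos_of_pos two_pos _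
        have : (1:ℝ)/t^(2:ℝ) ≤ 1/(2:ℝ)^(2:ℝ) := by
          apply one_div_le_one_div_of_le h2pos ht2
        have heq : (1/2:ℝ)^(2:ℝ) = 1/(2:ℝ)^(2:ℝ) := by
          rw [Real.div_rpow zero_le_one (by norm_num), Real.one_rpow]
        rw [hp0eq, heq]
        calc A ≤ 1 / t^(2:ℝ) := hm
          _ ≤ 1/(2:ℝ)^(2:ℝ) := this
      · have hp0eq : p0 = s - ε := max_eq_left h1.le
        have hp0q : p0 < q := by rw [hp0eq]; linarith
        have hnot : p0 ∉ S := fun h => absurd (csInf_le hSbdd h) (not_le.2 hp0q)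
        have hlt : mnorm μ X (β*p0) < t := by
          by_contra h
          push_neg at h
          exact hnot ⟨hp02, h⟩
        have hhalf : mnorm μ X p0 ≤ t/2 := by
          linarith only [hspeed p0 hp02, hlt]
        have hm := markov μ X hp0pos ht0 (hmem p0 hp02)
        rw [← mnorm_rpow μ X hp0pos.ne'] at hm
        have hmn : mnorm μ X p0 ^ p0 ≤ (t/2)^p0 :=
          Real.rpow_le_rpow (mnorm_nonneg μ X p0) hhalf hp0pos.le
        have htp : (0:ℝ) < t^p0 := Real.rpow_pos_of_pos ht0 _
        rw [half_rpow p0]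
        calc A ≤ mnorm μ X p0 ^ p0 / t^p0 := hm
          _ ≤ (t/2)^p0 / t^p0 := by gcongr
    -- lower bound on B
    set p' : ℝ := β^k * s with hp'def
    have hsp' : s ≤ p' := le_mul_of_one_le_left (by linarith) hβk1
    have hp'2 : 2 ≤ p' := by linarith
    have hp'0 : 0 < p' := by linarith
    have hnp' : (2:ℝ)^(k-1:ℕ) * t ≤ mnorm μ X p' := by
      have h2 := hiter (k-1) (β*s) (hs2.trans (le_mul_of_one_le_left (by linarith) hβ1))
      have heq : β^(k-1:ℕ) * (β*s) = p' := by
        rw [hp'def, show β^k = β^(k-1:ℕ) * β by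
          rw [← pow_succ, show (k-1)+1 = k by omega]]
        ring
      rw [heq] at h2
      have h3 : (2:ℝ)^(k-1:ℕ) * t ≤ 2^(k-1:ℕ) * mnorm μ X (β*s) :=
        mul_le_mul_of_nonneg_left hsβ (by positivity)
      linarith only [h2, h3]
    have hrt : r * t ≤ mnorm μ X p' / 2 := by
      have h1 : 2 * (r*t) ≤ 2^(k-1:ℕ) * t := by
        have := mul_le_mul_of_nonneg_right hr2 ht0.le
        linarith only [this]
      linarith only [h1, hnp']
    have hrt0 : 0 < r * t := mul_pos (lt_trans one_pos hr) ht0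
    have hPZ := paley_zygmund μ X hXm hp'0 (hmem (2*p') (by linarith))
    set m' : ℝ := (μ {ω | (1/2:ℝ)^p' * ∫ ω, |X ω|^p' ∂μ < |X ω|^p'}).toReal with hm'def
    have hnp'1 : 1 ≤ mnorm μ X p' := hn_ge_one p' hp'2
    have hn2p'1 : 1 ≤ mnorm μ X (2*p') := hn_ge_one (2*p') (by linarith)
    set a : ℝ := mnorm μ X p' with hadef
    set b : ℝ := mnorm μ X (2*p') with hbdef
    have ha0 : 0 < a := by linarith
    have hb0 : 0 < b := by linarith
    have hIa : ∫ ω, |X ω|^p' ∂μ = a^p' := (mnorm_rpow μ X hp'0.ne').symm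
    have hIb : ∫ ω, |X ω|^(2*p') ∂μ = b^(2*p') := (mnorm_rpow μ X (by positivity : (2*p') ≠ 0)).symm
    -- the PZ set is inside our target set
    have hsub : {ω | (1/2:ℝ)^p' * ∫ ω, |X ω|^p' ∂μ < |X ω|^p'} ⊆ {ω | r*t < |X ω|} := by
      intro ω hω
      simp only [Set.mem_setOf_eq] at hω ⊢
      have hc1 : (r*t)^p' ≤ (1/2:ℝ)^p' * ∫ ω, |X ω|^p' ∂μ := by
        rw [hIa, ← Real.mul_rpow (by norm_num) ha0.le]
        exact Real.rpow_le_rpow hrt0.le (by linarith) hp'0.le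
      by_contra h
      push_neg at h
      have := Real.rpow_le_rpow (abs_nonneg _) h hp'0.le
      linarith only [hc1, hω, this]
    have hm'B : m' ≤ B :=
      ENNReal.toReal_mono (measure_ne_top μ _) (measure_mono hsub)
    -- numerical lower bound for m'
    have hbreg : b ≤ 2*α*a := by
      have := hreg (2*p') p' hp'2 (by linarith)
      rw [show (2*p')/p' = 2 by field_simp] at this
      calc b ≤ α * 2 * a := this
        _ = 2*α*a := by ring
    have hθ' : (1/2:ℝ)^p' ≤ 1/2 := by
      calc (1/2:ℝ)^p' ≤ (1/2:ℝ)^(1:ℝ) :=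
            Real.rpow_le_rpow_of_exponent_ge (by norm_num) (by norm_num) (by linarith)
        _ = 1/2 := Real.rpow_one _
    have hθ'0 : (0:ℝ) ≤ (1/2:ℝ)^p' := Real.rpow_nonneg (by norm_num) _
    have hasq : (∫ ω, |X ω|^p' ∂μ)^2 = a^(2*p') := by
      rw [hIa, ← Real.rpow_natCast (a^p') 2, ← Real.rpow_mul ha0.le]
      norm_num
      rw [mul_comm]
    have hbp : (0:ℝ) < b^(2*p') := Real.rpow_pos_of_pos hb0 _
    have hm'low : (1/4:ℝ) * Real.exp (-(2*p'*L)) ≤ m' := by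
      rw [hasq, hIb] at hPZ
      have h14 : (1/4:ℝ) ≤ (1 - (1/2:ℝ)^p')^2 := by
        have hh : (1/2:ℝ) ≤ 1 - (1/2:ℝ)^p' := by linarith only [hθ']
        calc (1/4:ℝ) = (1/2:ℝ)^2 := by norm_num
          _ ≤ (1 - (1/2:ℝ)^p')^2 := pow_le_pow_left₀ (by norm_num) hh 2
      have hexp : Real.exp (-(2*p'*L)) * b^(2*p') ≤ a^(2*p') := by
        have hE1 : Real.exp (-(2*p'*L)) = (1/(2*α))^(2*p') := by
          rw [Real.rpow_def_of_pos (by positivity), one_div, Real.log_inv]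
          rw [← hL]
          ring_nf
        rw [hE1, ← Real.mul_rpow (by positivity) hb0.le]
        apply Real.rpow_le_rpow (by positivity) _ (by positivity)
        rw [div_mul_eq_mul_div, div_le_iff₀ (by positivity)]
        linarith only [hbreg]
      have h1 : (1/4:ℝ) * Real.exp (-(2*p'*L)) * b^(2*p') ≤ (1 - (1/2:ℝ)^p')^2 * a^(2*p') := by
        calc (1/4:ℝ) * Real.exp (-(2*p'*L)) * b^(2*p')
            = (1/4:ℝ) * (Real.exp (-(2*p'*L)) * b^(2*p')) := by ring
          _ ≤ (1 - (1/2:ℝ)^p')^2 * a^(2*p') := by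
              apply mul_le_mul h14 hexp (by positivity)
              positivity
      have := h1.trans hPZ
      calc (1/4:ℝ) * Real.exp (-(2*p'*L))
          = (1/4:ℝ) * Real.exp (-(2*p'*L)) * b^(2*p') / b^(2*p') := by
            rw [mul_div_cancel_right₀ _ hbp.ne']
        _ ≤ b^(2*p') * m' / b^(2*p') := by gcongr
        _ = m' := by rw [mul_comm (b^(2*p')) m', mul_div_cancel_right₀ _ hbp.ne']
    have hBlow : (1/4:ℝ) * Real.exp (-(2*p'*L)) ≤ B := hm'low.trans hm'B
    -- combine
    have hexp4 : Real.exp (-(2 * Real.log 2)) = 1/4 := by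
      rw [Real.exp_neg, show (2:ℝ)*Real.log 2 = Real.log 4 by
        rw [show (4:ℝ) = 2^(2:ℕ) by norm_num, Real.log_pow]; push_cast; ring,
        Real.exp_log (by norm_num)]
      norm_num
    calc A ^ C ≤ ((1/2:ℝ)^p0) ^ C := Real.rpow_le_rpow hA0 hAbound hC0
      _ = (1/2:ℝ)^(p0*C) := (Real.rpow_mul (by norm_num) p0 C).symm
      _ = Real.exp (-(p0 * (C * Real.log 2))) := by
          rw [Real.rpow_def_of_pos (by norm_num : (0:ℝ) < 1/2), one_div, Real.log_inv]
          ring_nf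
      _ ≤ Real.exp (-((s-ε) * (C * Real.log 2))) := by
          apply Real.exp_le_exp.2
          have hCl0 : 0 ≤ C * Real.log 2 := mul_nonneg hC0 hlog2.le
          linarith only [mul_le_mul_of_nonneg_right hp0ge hCl0]
      _ = Real.exp (-(s * Real.log 2)) * Real.exp (-(2*p'*L)) *
            Real.exp (ε * (C * Real.log 2)) := by
          rw [← Real.exp_add, ← Real.exp_add, hClog]
          congr 1
          rw [hp'def]
          ring
      _ ≤ (1/4) * Real.exp (-(2*p'*L)) * Real.exp (ε * (C * Real.log 2)) := by
          have h1 : Real.exp (-(s * Real.log 2)) ≤ 1/4 := by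
            rw [← hexp4]
            apply Real.exp_le_exp.2
            linarith only [mul_le_mul_of_nonneg_right hs2 hlog2.le]
          have h2 : (0:ℝ) < Real.exp (-(2*p'*L)) := Real.exp_pos _
          have h3 : (0:ℝ) < Real.exp (ε * (C * Real.log 2)) := Real.exp_pos _
          exact mul_le_mul_of_nonneg_right (mul_le_mul_of_nonneg_right h1 h2.le) h3.le
      _ ≤ B * Real.exp (ε * (C * Real.log 2)) :=
          mul_le_mul_of_nonneg_right hBlow (Real.exp_pos _).le
  -- pass to the limit ε → 0⁺
  have htend : Filter.Tendsto (fun ε : ℝ => B * Real.exp (ε * (C * Real.log 2)))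
      (nhdsWithin 0 (Set.Ioi 0)) (nhds (B * Real.exp (0 * (C * Real.log 2)))) := by
    apply Filter.Tendsto.mono_left _ nhdsWithin_le_nhds
    exact (continuous_const.mul
      (Real.continuous_exp.comp (continuous_id.mul continuous_const))).tendsto 0
  have hev : ∀ᶠ ε in nhdsWithin (0:ℝ) (Set.Ioi 0),
      A ^ C ≤ B * Real.exp (ε * (C * Real.log 2)) :=
    eventually_nhdsWithin_of_forall fun ε hε => key ε hε
  have := ge_of_tendsto htend hev
  simpa using this

/-- For α ≥ 1, β > 1, r > 1, with `k` the least integer such that `2^{k-2} ≥ r` and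
`C = (ln 2 + 2 β^k ln(2α)) / ln 2`: for any standardized `X` whose moments grow
α-regularly with speed β, `N(rt) ≤ C N(t)` for `t ≥ 2`, where `N(t) = -ln P(|X| > t)`;
equivalently `P(|X| > rt) ≥ P(|X| > t)^C`. -/
theorem stmt10 {Ω : Type*} [MeasurableSpace Ω] (μ : Measure Ω) [IsProbabilityMeasure μ]
    (X : Ω → ℝ) (α β r : ℝ) (hα : 1 ≤ α) (hβ : 1 < β) (hr : 1 < r)
    (hmean : ∫ ω, X ω ∂μ = 0) (hvar : ∫ ω, (X ω) ^ 2 ∂μ = 1)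
    (hmem : ∀ p : ℝ, 2 ≤ p → MemLp X (ENNReal.ofReal p) μ)
    (hreg : ∀ p q : ℝ, 2 ≤ q → q ≤ p → mnorm μ X p ≤ α * (p / q) * mnorm μ X q)
    (hspeed : ∀ p : ℝ, 2 ≤ p → 2 * mnorm μ X p ≤ mnorm μ X (β * p))
    (k : ℕ) (hk : IsLeast {m : ℕ | r ≤ 2 ^ ((m : ℝ) - 2)} k)
    (t : ℝ) (ht : 2 ≤ t) :
    (μ {ω | t < |X ω|}).toReal
        ^ ((Real.log 2 + 2 * β ^ k * Real.log (2 * α)) / Real.log 2)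
      ≤ (μ {ω | r * t < |X ω|}).toReal := by
  obtain ⟨Y, hYsm, hXY⟩ := (hmem 2 le_rfl).1
  have hYm : Measurable Y := hYsm.measurable
  have hmn : ∀ p : ℝ, mnorm μ X p = mnorm μ Y p := by
    intro p
    unfold mnorm
    congr 1
    refine integral_congr_ae (hXY.mono fun ω h => ?_)
    simp only [h]
  have hvar' : ∫ ω, (Y ω) ^ 2 ∂μ = 1 := by
    rw [← hvar]
    refine integral_congr_ae (hXY.mono fun ω h => ?_)
    show (Y ω)^2 = (X ω)^2
    rw [h]
  have hmem' : ∀ p : ℝ, 2 ≤ p → MemLp Y (ENNReal.ofReal p) μ :=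
    fun p hp => (hmem p hp).ae_eq hXY
  have hreg' : ∀ p q : ℝ, 2 ≤ q → q ≤ p → mnorm μ Y p ≤ α * (p / q) * mnorm μ Y q := by
    intro p q h1 h2
    rw [← hmn, ← hmn]
    exact hreg p q h1 h2
  have hspeed' : ∀ p : ℝ, 2 ≤ p → 2 * mnorm μ Y p ≤ mnorm μ Y (β * p) := by
    intro p hp
    rw [← hmn, ← hmn]
    exact hspeed p hp
  have hset : ∀ c : ℝ, μ {ω | c < |X ω|} = μ {ω | c < |Y ω|} := by
    intro c
    apply measure_congr
    filter_upwards [hXY] with ω h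
    change (c < |X ω|) = (c < |Y ω|)
    rw [h]
  rw [hset t, hset (r*t)]
  exact stmt10_aux μ Y α β r hα hβ hr hYm hvar' hmem' hreg' hspeed' k hk t ht
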